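/- Let P be a pyramid with apex V over a planar polygonal base with area S and perimeter p, and let h be the distance from V to the base plane. Then the total area of the lateral (side) faces of P is at least (1/2)·√((2S)² + p²h²). -/

import Mathlib

/-- Euclidean norm of a vector in ℝ³. -/
noncomputable def norm3 (v : Fin 3 → ℝ) : ℝ := Real.sqrt (v 0 ^ 2 + v 1 ^ 2 + v 2 ^ 2)

/-- Area of the triangle `PQR` in ℝ³, via the cross product. -/
noncomputable def triArea (P Q R : Fin 3 → ℝ) : ℝ :=
  norm3 (crossProduct (Q - P) (R - P)) / 2

/-- For a pyramid with apex `V` over a planar polygonal base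
`A 0, A 1, …` (placed in the plane `z = 0`) with area `S` (shoelace formula),
perimeter `p`, and apex at distance `h` from the base plane, the total area of the
lateral faces is at least `(1/2)·√((2S)² + p²h²)`. -/
theorem pyramid_lateral_area_lower_bound (n : ℕ) (A : Fin (n + 3) → Fin 3 → ℝ)
    (V : Fin 3 → ℝ) (hbase : ∀ i, A i 2 = 0)
    (h S p : ℝ) (hh : h = |V 2|)
    (hS : S = |∑ i, (A i 0 * A (i + 1) 1 - A (i + 1) 0 * A i 1)| / 2)
    (hp : p = ∑ i, norm3 (A (i + 1) - A i)) :
    (1 / 2) * Real.sqrt ((2 * S) ^ 2 + p ^ 2 * h ^ 2) ≤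
      ∑ i, triArea V (A i) (A (i + 1)) := by
  classical
  set c : Fin (n + 3) → ℝ := fun i =>
    (A i 0 - V 0) * (A (i + 1) 1 - V 1) - (A i 1 - V 1) * (A (i + 1) 0 - V 0) with hc
  set d : Fin (n + 3) → ℝ := fun i => norm3 (A (i + 1) - A i) with hd
  have hd2 : ∀ i, d i ^ 2 = (A (i + 1) 0 - A i 0) ^ 2 + (A (i + 1) 1 - A i 1) ^ 2 := by
    intro i
    simp only [hd, norm3, Pi.sub_apply, hbase, sub_zero]
    rw [Real.sq_sqrt (by positivity)]
    ring
  have htri : ∀ i, triArea V (A i) (A (i + 1)) =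
      Real.sqrt (c i ^ 2 + (V 2 * d i) ^ 2) / 2 := by
    intro i
    unfold triArea norm3
    congr 1
    rw [cross_apply]
    simp only [Pi.sub_apply, hbase, Matrix.cons_val_zero, Matrix.cons_val_one,
      Matrix.head_cons, Matrix.cons_val_two, Matrix.tail_cons]
    simp only [hc]
    rw [mul_pow, hd2 i]
    ring
  have hshift : ∀ g : Fin (n + 3) → ℝ, ∑ i, g (i + 1) = ∑ i, g i := by
    intro g
    exact Fintype.sum_equiv (Equiv.addRight 1) _ _ (fun i => rfl)
  have hsum_c : ∑ i, c i = ∑ i, (A i 0 * A (i + 1) 1 - A (i + 1) 0 * A i 1) := by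
    calc ∑ i, c i
        = ∑ i, ((A i 0 * A (i + 1) 1 - A (i + 1) 0 * A i 1)
            + (V 1 * A (i + 1) 0 - V 1 * A i 0) + (V 0 * A i 1 - V 0 * A (i + 1) 1)) := by
          refine Finset.sum_congr rfl fun i _ => ?_
          simp only [hc]; ring
      _ = ∑ i, (A i 0 * A (i + 1) 1 - A (i + 1) 0 * A i 1)
            + ((∑ i, V 1 * A (i + 1) 0) - ∑ i, V 1 * A i 0)
            + ((∑ i, V 0 * A i 1) - ∑ i, V 0 * A (i + 1) 1) := by
          simp only [Finset.sum_add_distrib, Finset.sum_sub_distrib]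
      _ = ∑ i, (A i 0 * A (i + 1) 1 - A (i + 1) 0 * A i 1) := by
          rw [hshift (fun i => V 1 * A i 0), hshift (fun i => V 0 * A i 1)]
          ring
  set f : Fin (n + 3) → EuclideanSpace ℝ (Fin 2) := fun i => WithLp.toLp 2 ![c i, V 2 * d i] with hf
  have happly : ∀ (j : Fin 2), (∑ i, f i) j = ∑ i, f i j := fun j => by
    rw [WithLp.ofLp_sum, Finset.sum_apply]
  have hnormf : ∀ i, ‖f i‖ = Real.sqrt (c i ^ 2 + (V 2 * d i) ^ 2) := by
    intro i
    rw [EuclideanSpace.norm_eq]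
    simp [hf, Fin.sum_univ_two, Real.norm_eq_abs, sq_abs]
  have hsumf : ‖∑ i, f i‖ = Real.sqrt ((∑ i, c i) ^ 2 + (V 2 * ∑ i, d i) ^ 2) := by
    rw [EuclideanSpace.norm_eq]
    rw [Fin.sum_univ_two]
    rw [happly 0, happly 1]
    simp [hf, Real.norm_eq_abs, sq_abs, Finset.mul_sum]
  have key : ‖∑ i, f i‖ ≤ ∑ i, ‖f i‖ := norm_sum_le _ _
  have hLHS : (1 / 2) * Real.sqrt ((2 * S) ^ 2 + p ^ 2 * h ^ 2) = ‖∑ i, f i‖ / 2 := by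
    rw [hsumf, hsum_c]
    have h1 : (2 * S) ^ 2 = (∑ i, (A i 0 * A (i + 1) 1 - A (i + 1) 0 * A i 1)) ^ 2 := by
      rw [hS]; rw [mul_div_cancel₀ _ (by norm_num : (2:ℝ) ≠ 0)]; rw [sq_abs]
    have h2 : p ^ 2 * h ^ 2 = (V 2 * ∑ i, d i) ^ 2 := by
      rw [hp, hh]
      simp only [hd]
      rw [mul_pow, sq_abs]
      ring
    rw [h1, h2]
    ring
  rw [hLHS]
  calc ‖∑ i, f i‖ / 2 ≤ (∑ i, ‖f i‖) / 2 := by linarith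
    _ = ∑ i, triArea V (A i) (A (i + 1)) := by
        rw [Finset.sum_div]
        exact Finset.sum_congr rfl fun i _ => by rw [hnormf, htri]
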